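/- Let 𝔬 be a finite-dimensional local commutative ℂ-algebra and let A be any commutative ℂ-algebra. Then there exists a commutative ℂ-algebra A^𝔬 together with bijections Φ_R : Hom_{ℂ-alg}(A^𝔬, R) ≅ Hom_{ℂ-alg}(A, R ⊗_ℂ 𝔬), one for each commutative ℂ-algebra R, natural in R: for every ℂ-algebra homomorphism g : R → R' and every f ∈ Hom_{ℂ-alg}(A^𝔬, R), one has Φ_{R'}(g ∘ f) = ((g ⊗ id_𝔬) ∘ Φ_R(f)). In other words, the functor from commutative ℂ-algebras to sets sending R to Hom_{ℂ-alg}(A, R ⊗_ℂ 𝔬) is corepresentable. -/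

import Mathlib

open TensorProduct

universe u

/-- A bundled commutative ℂ-algebra. -/
structure BundledCommAlg : Type (u + 1) where
  carrier : Type u
  [commRing : CommRing carrier]
  [algebra : Algebra ℂ carrier]

attribute [instance] BundledCommAlg.commRing BundledCommAlg.algebra

noncomputable section WeilAux
set_option linter.unusedSectionVars false

variable (𝔬 : Type u) [CommRing 𝔬] [Algebra ℂ 𝔬] [FiniteDimensional ℂ 𝔬]
variable (A : Type u) [CommRing A] [Algebra ℂ A]

abbrev wIdx : Type := Fin (Module.finrank ℂ 𝔬)

def wb : Module.Basis (wIdx 𝔬) ℂ 𝔬 := Module.finBasis ℂ 𝔬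

abbrev wP : Type u := MvPolynomial (A × wIdx 𝔬) ℂ

def wT (a : A) : wP 𝔬 A ⊗[ℂ] 𝔬 := ∑ i, MvPolynomial.X (a, i) ⊗ₜ[ℂ] wb 𝔬 i

variable {𝔬 A} in
theorem coord_map {R : Type u} [CommRing R] [Algebra ℂ R]
    (g : wP 𝔬 A →ₐ[ℂ] R) (x : wP 𝔬 A ⊗[ℂ] 𝔬) (j : wIdx 𝔬) :
    ((wb 𝔬).baseChange R).repr ((Algebra.TensorProduct.map g (AlgHom.id ℂ 𝔬)) x) j
      = g (((wb 𝔬).baseChange (wP 𝔬 A)).repr x j) := by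
  induction x using TensorProduct.induction_on with
  | zero => simp
  | tmul p m =>
      simp [Module.Basis.baseChange_repr_tmul, Algebra.smul_def, map_mul, g.commutes]
  | add x y hx hy => simp [map_add, hx, hy]

/-- the relation elements in `wP ⊗ 𝔬` -/
def wRel : Set (wP 𝔬 A ⊗[ℂ] 𝔬) :=
  (Set.range fun p : A × A => wT 𝔬 A (p.1 * p.2) - wT 𝔬 A p.1 * wT 𝔬 A p.2) ∪
  (Set.range fun p : A × A => wT 𝔬 A (p.1 + p.2) - wT 𝔬 A p.1 - wT 𝔬 A p.2) ∪
  (Set.range fun c : ℂ =>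
    wT 𝔬 A (algebraMap ℂ A c) - algebraMap ℂ (wP 𝔬 A ⊗[ℂ] 𝔬) c)

def wIdeal : Ideal (wP 𝔬 A) :=
  Ideal.span {x | ∃ r ∈ wRel 𝔬 A, ∃ j, x = ((wb 𝔬).baseChange (wP 𝔬 A)).repr r j}

def wQ : Type u := wP 𝔬 A ⧸ wIdeal 𝔬 A

instance : CommRing (wQ 𝔬 A) := Ideal.Quotient.commRing _
instance : Algebra ℂ (wQ 𝔬 A) := Ideal.Quotient.algebra _

def wπ : wP 𝔬 A →ₐ[ℂ] wQ 𝔬 A := Ideal.Quotient.mkₐ ℂ (wIdeal 𝔬 A)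

variable {𝔬 A}

variable {R : Type u} [CommRing R] [Algebra ℂ R]

/-- if an alg hom kills the ideal generators, the mapped relations vanish -/
theorem map_rel_zero (g : wP 𝔬 A →ₐ[ℂ] R)
    (hg : ∀ x ∈ wIdeal 𝔬 A, g x = 0) {r : wP 𝔬 A ⊗[ℂ] 𝔬} (hr : r ∈ wRel 𝔬 A) :
    (Algebra.TensorProduct.map g (AlgHom.id ℂ 𝔬)) r = 0 := by
  apply ((wb 𝔬).baseChange R).repr.injective
  ext j
  rw [coord_map]
  simp only [map_zero, Finsupp.coe_zero, Pi.zero_apply]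
  exact hg _ (Ideal.subset_span ⟨r, hr, j, rfl⟩)

theorem map_wT (g : wP 𝔬 A →ₐ[ℂ] R) (a : A) :
    (Algebra.TensorProduct.map g (AlgHom.id ℂ 𝔬)) (wT 𝔬 A a)
      = ∑ i, g (MvPolynomial.X (a, i)) ⊗ₜ[ℂ] wb 𝔬 i := by
  simp [wT, map_sum]

/-- reconstruction: sum of coordinates times basis -/
theorem sum_repr (x : R ⊗[ℂ] 𝔬) :
    ∑ i, (((wb 𝔬).baseChange R).repr x i) ⊗ₜ[ℂ] wb 𝔬 i = x := by
  have h := ((wb 𝔬).baseChange R).sum_repr x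
  conv_rhs => rw [← h]
  refine Finset.sum_congr rfl fun i _ => ?_
  rw [Module.Basis.baseChange_apply, TensorProduct.smul_tmul', smul_eq_mul, mul_one]


theorem map_rel_zero' (g : wP 𝔬 A →ₐ[ℂ] R)
    (hg : ∀ x ∈ wIdeal 𝔬 A, g x = 0) :
    (∀ a b : A, (Algebra.TensorProduct.map g (AlgHom.id ℂ 𝔬)) (wT 𝔬 A (a * b))
        = (Algebra.TensorProduct.map g (AlgHom.id ℂ 𝔬)) (wT 𝔬 A a)
          * (Algebra.TensorProduct.map g (AlgHom.id ℂ 𝔬)) (wT 𝔬 A b)) ∧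
    (∀ a b : A, (Algebra.TensorProduct.map g (AlgHom.id ℂ 𝔬)) (wT 𝔬 A (a + b))
        = (Algebra.TensorProduct.map g (AlgHom.id ℂ 𝔬)) (wT 𝔬 A a)
          + (Algebra.TensorProduct.map g (AlgHom.id ℂ 𝔬)) (wT 𝔬 A b)) ∧
    (∀ c : ℂ, (Algebra.TensorProduct.map g (AlgHom.id ℂ 𝔬)) (wT 𝔬 A (algebraMap ℂ A c))
        = algebraMap ℂ (R ⊗[ℂ] 𝔬) c) := by
  refine ⟨fun a b => ?_, fun a b => ?_, fun c => ?_⟩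
  · have h := map_rel_zero g hg (r := wT 𝔬 A (a * b) - wT 𝔬 A a * wT 𝔬 A b)
      (Or.inl (Or.inl ⟨(a, b), rfl⟩))
    rw [map_sub, map_mul, sub_eq_zero] at h; exact h
  · have h := map_rel_zero g hg (r := wT 𝔬 A (a + b) - wT 𝔬 A a - wT 𝔬 A b)
      (Or.inl (Or.inr ⟨(a, b), rfl⟩))
    rw [map_sub, map_sub, sub_sub, sub_eq_zero] at h; exact h
  · have h := map_rel_zero g hg
      (r := wT 𝔬 A (algebraMap ℂ A c) - algebraMap ℂ (wP 𝔬 A ⊗[ℂ] 𝔬) c)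
      (Or.inr ⟨c, rfl⟩)
    rw [map_sub, AlgHom.commutes, sub_eq_zero] at h; exact h

theorem wFwd_aux (f : wQ 𝔬 A →ₐ[ℂ] R) : ∀ x ∈ wIdeal 𝔬 A, (f.comp (wπ 𝔬 A)) x = 0 :=
  fun x hx => by
    rw [AlgHom.comp_apply,
      show (wπ 𝔬 A) x = 0 from Ideal.Quotient.eq_zero_iff_mem.mpr hx,
      map_zero]

/-- forward map -/
def wFwd (f : wQ 𝔬 A →ₐ[ℂ] R) : A →ₐ[ℂ] R ⊗[ℂ] 𝔬 where
  toFun := fun a => (Algebra.TensorProduct.map (f.comp (wπ 𝔬 A)) (AlgHom.id ℂ 𝔬)) (wT 𝔬 A a)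
  map_one' := by
    have := (map_rel_zero' _ (wFwd_aux f)).2.2 1; simpa [Algebra.TensorProduct.one_def] using this
  map_mul' := (map_rel_zero' _ (wFwd_aux f)).1
  map_zero' := by
    have := (map_rel_zero' _ (wFwd_aux f)).2.1 0 0; simpa using this
  map_add' := (map_rel_zero' _ (wFwd_aux f)).2.1
  commutes' := fun c => (map_rel_zero' _ (wFwd_aux f)).2.2 c

theorem wFwd_apply (f : wQ 𝔬 A →ₐ[ℂ] R) (a : A) :
    wFwd f a = (Algebra.TensorProduct.map (f.comp (wπ 𝔬 A)) (AlgHom.id ℂ 𝔬)) (wT 𝔬 A a) := rfl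

/-- backward: the alg hom on the polynomial ring -/
def wg (φ : A →ₐ[ℂ] R ⊗[ℂ] 𝔬) : wP 𝔬 A →ₐ[ℂ] R :=
  MvPolynomial.aeval (fun p : A × wIdx 𝔬 => ((wb 𝔬).baseChange R).repr (φ p.1) p.2)

theorem map_wg_wT (φ : A →ₐ[ℂ] R ⊗[ℂ] 𝔬) (a : A) :
    (Algebra.TensorProduct.map (wg φ) (AlgHom.id ℂ 𝔬)) (wT 𝔬 A a) = φ a := by
  rw [map_wT]
  simp only [wg, MvPolynomial.aeval_X]
  exact sum_repr (φ a)

theorem wg_vanish (φ : A →ₐ[ℂ] R ⊗[ℂ] 𝔬) : ∀ x ∈ wIdeal 𝔬 A, wg φ x = 0 := by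
  have hrel : ∀ r ∈ wRel 𝔬 A, (Algebra.TensorProduct.map (wg φ) (AlgHom.id ℂ 𝔬)) r = 0 := by
    intro r hr
    rw [wRel, Set.mem_union, Set.mem_union] at hr
    rcases hr with ((⟨⟨a, b⟩, rfl⟩ | ⟨⟨a, b⟩, rfl⟩) | ⟨c, rfl⟩)
    · simp [map_sub, map_mul, map_wg_wT]
    · simp [map_sub, map_wg_wT]
    · simp only [map_sub, map_wg_wT, AlgHom.commutes, map_one]
      simp [AlgHom.commutes]
  intro x hx
  have : wIdeal 𝔬 A ≤ RingHom.ker (wg φ) := by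
    rw [wIdeal, Ideal.span_le]
    rintro x ⟨r, hr, j, rfl⟩
    have := coord_map (wg φ) r j
    rw [hrel r hr] at this
    simpa [RingHom.mem_ker] using this.symm
  exact this hx

def wBwd (φ : A →ₐ[ℂ] R ⊗[ℂ] 𝔬) : wQ 𝔬 A →ₐ[ℂ] R :=
  Ideal.Quotient.liftₐ (wIdeal 𝔬 A) (wg φ) (wg_vanish φ)

theorem wBwd_comp (φ : A →ₐ[ℂ] R ⊗[ℂ] 𝔬) : (wBwd φ).comp (wπ 𝔬 A) = wg φ :=
  Ideal.Quotient.liftₐ_comp _ _ _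


theorem repr_wT (a : A) (j : wIdx 𝔬) :
    ((wb 𝔬).baseChange (wP 𝔬 A)).repr (wT 𝔬 A a) j = MvPolynomial.X (a, j) := by
  have h : wT 𝔬 A a = ∑ i, (MvPolynomial.X (a, i) : wP 𝔬 A) • ((wb 𝔬).baseChange (wP 𝔬 A)) i := by
    rw [wT]
    refine Finset.sum_congr rfl fun i _ => ?_
    rw [Module.Basis.baseChange_apply, TensorProduct.smul_tmul', smul_eq_mul, mul_one]
  rw [h]
  have := ((wb 𝔬).baseChange (wP 𝔬 A)).repr_sum_self
    (fun i => (MvPolynomial.X (a, i) : wP 𝔬 A))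
  exact congrFun this j

def wEquiv : (wQ 𝔬 A →ₐ[ℂ] R) ≃ (A →ₐ[ℂ] R ⊗[ℂ] 𝔬) where
  toFun := wFwd
  invFun := wBwd
  left_inv f := by
    apply Ideal.Quotient.algHom_ext
    apply MvPolynomial.algHom_ext
    intro p
    show (wBwd (wFwd f)).comp (wπ 𝔬 A) (MvPolynomial.X p) = _
    rw [wBwd_comp]
    have h1 : wg (wFwd f) (MvPolynomial.X p)
        = ((wb 𝔬).baseChange R).repr ((wFwd f) p.1) p.2 := by
      simp [wg]
    rw [h1, wFwd_apply, coord_map, repr_wT]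
    rfl
  right_inv φ := by
    ext a
    rw [wFwd_apply, wBwd_comp φ, map_wg_wT]

theorem wEquiv_natural {R' : Type u} [CommRing R'] [Algebra ℂ R']
    (g : R →ₐ[ℂ] R') (f : wQ 𝔬 A →ₐ[ℂ] R) :
    wEquiv (g.comp f) = (Algebra.TensorProduct.map g (AlgHom.id ℂ 𝔬)).comp (wEquiv f) := by
  ext a
  show wFwd (g.comp f) a = (Algebra.TensorProduct.map g (AlgHom.id ℂ 𝔬)) (wFwd f a)
  rw [wFwd_apply, wFwd_apply, AlgHom.comp_assoc]
  rw [show (AlgHom.id ℂ 𝔬) = (AlgHom.id ℂ 𝔬).comp (AlgHom.id ℂ 𝔬) from rfl]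
  rw [Algebra.TensorProduct.map_comp]
  rfl

end WeilAux

/-- Let `𝔬` be a finite-dimensional local commutative ℂ-algebra and `A` any
commutative ℂ-algebra. Then the functor `R ↦ Hom_{ℂ-alg}(A, R ⊗[ℂ] 𝔬)` on commutative
ℂ-algebras is corepresentable: there is a commutative ℂ-algebra `A^𝔬 = B` together with
bijections `Hom_{ℂ-alg}(B, R) ≅ Hom_{ℂ-alg}(A, R ⊗[ℂ] 𝔬)`, natural in `R`. -/
theorem weil_restriction_corepresentable
    (𝔬 : Type u) [CommRing 𝔬] [Algebra ℂ 𝔬] [IsLocalRing 𝔬] [FiniteDimensional ℂ 𝔬]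
    (A : Type u) [CommRing A] [Algebra ℂ A] :
    ∃ (B : BundledCommAlg.{u})
      (Φ : ∀ R : BundledCommAlg.{u},
        (B.carrier →ₐ[ℂ] R.carrier) ≃ (A →ₐ[ℂ] (R.carrier ⊗[ℂ] 𝔬))),
      ∀ (R R' : BundledCommAlg.{u}) (g : R.carrier →ₐ[ℂ] R'.carrier)
        (f : B.carrier →ₐ[ℂ] R.carrier),
        Φ R' (g.comp f) =
          (Algebra.TensorProduct.map g (AlgHom.id ℂ 𝔬)).comp (Φ R f) := by
  exact ⟨⟨wQ 𝔬 A⟩, fun R => wEquiv, fun R R' g f => wEquiv_natural g f⟩
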